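/- (Cotlar's almost orthogonality lemma) If v and (w_j)_{j∈J} (J finite) are elements of a complex inner product space, then ∑_j |⟨v, w_j⟩|² ≤ ⟨v, v⟩ · max_j ∑_i |⟨w_i, w_j⟩|. -/

import Mathlib

open Finset

/-- Cotlar's almost orthogonality lemma: for `v` and a finite family `(w_j)` in a complex
inner product space, `∑_j |⟨v, w_j⟩|² ≤ ⟨v,v⟩ ⬝ max_j ∑_i |⟨w_i, w_j⟩|`. -/
theorem stmt11 {V : Type*} [NormedAddCommGroup V] [InnerProductSpace ℂ V]
    {J : Type*} [Fintype J] [Nonempty J] (v : V) (w : J → V) :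
    ∑ j : J, ‖(inner ℂ v (w j) : ℂ)‖ ^ 2 ≤
      (inner ℂ v v : ℂ).re *
        Finset.univ.sup' Finset.univ_nonempty
          (fun j => ∑ i : J, ‖(inner ℂ (w i) (w j) : ℂ)‖) := by
  set a : J → ℂ := fun j => inner ℂ v (w j) with ha
  set S : ℝ := ∑ j : J, ‖a j‖ ^ 2 with hSdef
  set M : ℝ := Finset.univ.sup' Finset.univ_nonempty
      (fun j => ∑ i : J, ‖(inner ℂ (w i) (w j) : ℂ)‖) with hM
  have hS0 : 0 ≤ S := Finset.sum_nonneg fun j _ => by positivity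
  have hM0 : 0 ≤ M := by
    obtain ⟨j0⟩ := ‹Nonempty J›
    refine le_trans ?_ (Finset.le_sup' _ (Finset.mem_univ j0))
    exact Finset.sum_nonneg fun i _ => norm_nonneg _
  set u : V := ∑ j : J, (starRingEnd ℂ (a j)) • w j with hu
  have hvu : (inner ℂ v u : ℂ) = (S : ℂ) := by
    rw [hu, inner_sum]
    push_cast [hSdef]
    refine Finset.sum_congr rfl fun j _ => ?_
    rw [inner_smul_right]
    simpa using RCLike.conj_mul (a j)
  have hcs : S ≤ ‖v‖ * ‖u‖ := by
    have h1 : S ≤ ‖(inner ℂ v u : ℂ)‖ := by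
      rw [hvu, Complex.norm_real]
      exact le_abs_self S
    exact h1.trans (norm_inner_le_norm v u)
  have huu : ‖u‖ ^ 2 ≤ S * M := by
    have huu1 : (inner ℂ u u : ℂ) =
        ∑ i : J, ∑ j : J, a i * (starRingEnd ℂ (a j)) * inner ℂ (w i) (w j) := by
      rw [hu, sum_inner]
      refine Finset.sum_congr rfl fun i _ => ?_
      rw [inner_sum]
      refine Finset.sum_congr rfl fun j _ => ?_
      rw [inner_smul_left, inner_smul_right]
      ring_nf
      simp [mul_assoc, mul_comm, mul_left_comm]
    have h2 : ‖u‖ ^ 2 ≤ ∑ i : J, ∑ j : J, ‖a i‖ * ‖a j‖ * ‖(inner ℂ (w i) (w j) : ℂ)‖ := by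
      have h0 : ‖u‖ ^ 2 ≤ ‖(inner ℂ u u : ℂ)‖ := by
        rw [← inner_self_eq_norm_sq (𝕜 := ℂ) u]
        exact RCLike.re_le_norm _
      rw [huu1] at h0
      refine le_trans h0 ?_
      refine le_trans (norm_sum_le _ _) (Finset.sum_le_sum fun i _ => ?_)
      refine le_trans (norm_sum_le _ _) (Finset.sum_le_sum fun j _ => ?_)
      simp [norm_mul]
    have h3 : ∑ i : J, ∑ j : J, ‖a i‖ * ‖a j‖ * ‖(inner ℂ (w i) (w j) : ℂ)‖ ≤
        ∑ i : J, ∑ j : J, (‖a i‖ ^ 2 / 2 + ‖a j‖ ^ 2 / 2) * ‖(inner ℂ (w i) (w j) : ℂ)‖ := by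
      refine Finset.sum_le_sum fun i _ => Finset.sum_le_sum fun j _ => ?_
      have := sq_nonneg (‖a i‖ - ‖a j‖)
      have hn : (0:ℝ) ≤ ‖(inner ℂ (w i) (w j) : ℂ)‖ := norm_nonneg _
      nlinarith
    have hsymm : ∀ i j : J, ‖(inner ℂ (w i) (w j) : ℂ)‖ = ‖(inner ℂ (w j) (w i) : ℂ)‖ :=
      fun i j => norm_inner_symm (w i) (w j)
    have h4 : ∑ i : J, ∑ j : J, (‖a i‖ ^ 2 / 2 + ‖a j‖ ^ 2 / 2) * ‖(inner ℂ (w i) (w j) : ℂ)‖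
        = ∑ j : J, ‖a j‖ ^ 2 * ∑ i : J, ‖(inner ℂ (w i) (w j) : ℂ)‖ := by
      have e1 : ∑ i : J, ∑ j : J, (‖a i‖ ^ 2 / 2) * ‖(inner ℂ (w i) (w j) : ℂ)‖
          = ∑ j : J, (‖a j‖ ^ 2 / 2) * ∑ i : J, ‖(inner ℂ (w i) (w j) : ℂ)‖ := by
        refine Finset.sum_congr rfl fun i _ => ?_
        rw [Finset.mul_sum]
        exact Finset.sum_congr rfl fun j _ => by rw [hsymm i j]
      have e2 : ∑ i : J, ∑ j : J, (‖a j‖ ^ 2 / 2) * ‖(inner ℂ (w i) (w j) : ℂ)‖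
          = ∑ j : J, (‖a j‖ ^ 2 / 2) * ∑ i : J, ‖(inner ℂ (w i) (w j) : ℂ)‖ := by
        rw [Finset.sum_comm]
        exact Finset.sum_congr rfl fun j _ => by rw [Finset.mul_sum]
      calc ∑ i : J, ∑ j : J, (‖a i‖ ^ 2 / 2 + ‖a j‖ ^ 2 / 2) * ‖(inner ℂ (w i) (w j) : ℂ)‖
          = (∑ i : J, ∑ j : J, (‖a i‖ ^ 2 / 2) * ‖(inner ℂ (w i) (w j) : ℂ)‖)
            + ∑ i : J, ∑ j : J, (‖a j‖ ^ 2 / 2) * ‖(inner ℂ (w i) (w j) : ℂ)‖ := by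
            rw [← Finset.sum_add_distrib]
            exact Finset.sum_congr rfl fun i _ => by
              rw [← Finset.sum_add_distrib]
              exact Finset.sum_congr rfl fun j _ => by ring
        _ = ∑ j : J, ‖a j‖ ^ 2 * ∑ i : J, ‖(inner ℂ (w i) (w j) : ℂ)‖ := by
            rw [e1, e2, ← Finset.sum_add_distrib]
            exact Finset.sum_congr rfl fun j _ => by ring
    have h5 : ∑ j : J, ‖a j‖ ^ 2 * ∑ i : J, ‖(inner ℂ (w i) (w j) : ℂ)‖ ≤ S * M := by
      rw [hSdef, Finset.sum_mul]
      refine Finset.sum_le_sum fun j _ => ?_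
      have : ∑ i : J, ‖(inner ℂ (w i) (w j) : ℂ)‖ ≤ M := by
        rw [hM]
        exact Finset.le_sup' (f := fun j => ∑ i : J, ‖(inner ℂ (w i) (w j) : ℂ)‖)
          (Finset.mem_univ j)
      exact mul_le_mul_of_nonneg_left this (by positivity)
    linarith
  have hv2 : (inner ℂ v v : ℂ).re = ‖v‖ ^ 2 := by
    simpa using inner_self_eq_norm_sq (𝕜 := ℂ) v
  rw [hv2]
  have h1 : S * S ≤ ‖v‖ ^ 2 * (S * M) := by
    have h2 : S * S ≤ (‖v‖ * ‖u‖) * (‖v‖ * ‖u‖) :=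
      mul_le_mul hcs hcs hS0 (by positivity)
    nlinarith [mul_le_mul_of_nonneg_left huu (sq_nonneg ‖v‖)]
  nlinarith [mul_nonneg (sq_nonneg ‖v‖) hM0, h1, hS0]
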